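/- Let n be an odd perfect number whose prime factorization is n = p₁^{α₁} ⋯ p_k^{α_k} · q^{β}, where p₁, …, p_k, q are distinct odd primes, each α_i is even, β is odd, and q ≡ 5 (mod 8). Write σ(q^β)/2 = p₁^{r₁} ⋯ p_k^{r_k} (its prime factorization, with r_i ≥ 0). Then the number of indices i ∈ {1, …, k} such that r_i is odd and p_i is not a quadratic residue modulo q (i.e., the Legendre symbol (p_i/q) = −1) is odd. -/

import Mathlib

open ArithmeticFunction Finset

/-- If `n` is an odd perfect number with prime factorization
`n = p₁^{α₁} ⋯ p_k^{α_k} · q^β`, where the `pᵢ` and `q` are distinct odd primes,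
each `αᵢ` is even, `β` is odd and `q ≡ 5 [MOD 8]`, and if
`σ(q^β)/2 = p₁^{r₁} ⋯ p_k^{r_k}`, then the number of indices `i` with `rᵢ` odd
and `pᵢ` a quadratic non-residue mod `q` is odd. -/
theorem stmt0 (n k : ℕ) (p : Fin k → ℕ) (α : Fin k → ℕ) (q β : ℕ)
    (hn_odd : Odd n) (hn_perf : n.Perfect)
    (hp_prime : ∀ i, (p i).Prime) (hp_odd : ∀ i, Odd (p i))
    (hp_inj : Function.Injective p)
    (hq_prime : q.Prime) (hq_odd : Odd q) (hpq : ∀ i, p i ≠ q)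
    (hα_even : ∀ i, Even (α i)) (hα_pos : ∀ i, 0 < α i)
    (hβ_odd : Odd β)
    (hq5 : q % 8 = 5)
    (hfac : n = (∏ i, p i ^ α i) * q ^ β)
    (r : Fin k → ℕ)
    (hr : ArithmeticFunction.sigma 1 (q ^ β) = 2 * ∏ i, p i ^ r i) :
    Odd (univ.filter fun i =>
      Odd (r i) ∧ @legendreSym q ⟨hq_prime⟩ (p i) = -1).card := by
  haveI : Fact q.Prime := ⟨hq_prime⟩
  -- σ(q^β) ≡ 1 (mod q)
  have hσ : ((2 * ∏ i, p i ^ r i : ℕ) : ZMod q) = 1 := by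
    rw [← hr, sigma_one_apply, Nat.sum_divisors_prime_pow hq_prime]
    push_cast
    simp [ZMod.natCast_self, zero_pow_eq]
  -- legendre symbol of the RHS is 1
  have h1 : legendreSym q ((2 * ∏ i, p i ^ r i : ℕ) : ℤ) = 1 := by
    rw [legendreSym.eq_one_iff]
    · rw [Int.cast_natCast, hσ]; exact IsSquare.one
    · rw [Int.cast_natCast, hσ]; exact one_ne_zero
  -- expand multiplicatively
  have hexp : legendreSym q ((2 * ∏ i, p i ^ r i : ℕ) : ℤ) =
      legendreSym q 2 * ∏ i, legendreSym q (p i) ^ r i := by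
    push_cast
    rw [legendreSym.mul]
    congr 1
    have h := map_prod (legendreSym.hom q) (fun x => (p x : ℤ) ^ r x) univ
    simp only [map_pow, legendreSym.hom_apply] at h
    exact h
  -- legendreSym q 2 = -1
  have h2 : legendreSym q 2 = -1 := by
    rw [legendreSym.at_two (by rintro rfl; simp at hq5), ZMod.χ₈_nat_mod_eight, hq5]
    decide
  -- each factor
  have hpne : ∀ i, ((p i : ℤ) : ZMod q) ≠ 0 := by
    intro i
    rw [Int.cast_natCast, Ne, ZMod.natCast_eq_zero_iff]
    intro hdvd
    exact hpq i ((Nat.prime_dvd_prime_iff_eq hq_prime (hp_prime i)).mp hdvd).symm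
  have hfac : ∀ i, legendreSym q (p i) ^ r i =
      if Odd (r i) ∧ legendreSym q (p i) = -1 then (-1 : ℤ) else 1 := by
    intro i
    rcases legendreSym.eq_one_or_neg_one q (hpne i) with h | h
    · rw [h, one_pow, if_neg]; rintro ⟨-, hc⟩; norm_num at hc
    · rw [h]
      rcases Nat.even_or_odd (r i) with he | ho
      · rw [he.neg_one_pow, if_neg]
        rintro ⟨ho, -⟩; exact (Nat.not_odd_iff_even.mpr he) ho
      · rw [ho.neg_one_pow, if_pos ⟨ho, rfl⟩]
  have key : (∏ i, legendreSym q (p i) ^ r i) =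
      (-1 : ℤ) ^ (univ.filter fun i =>
        Odd (r i) ∧ legendreSym q (p i) = -1).card := by
    rw [Finset.prod_congr rfl fun i _ => hfac i, Finset.prod_ite, Finset.prod_const,
      Finset.prod_const, one_pow, mul_one]
  rw [hexp, h2, key] at h1
  rw [← Nat.not_even_iff_odd]
  intro hev
  rw [hev.neg_one_pow] at h1
  norm_num at h1
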